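/- Assume that for every x ∈ X and u ∈ U, sup_{w ∈ W} l(x, u, w) ≥ 0, and that for every y ∈ Y the preimage h^{-1}{y} is a finite indexed set of at most M elements. Suppose there exist a function V̄ : (ℝ ∪ {-∞})^M × Y → ℝ and a stationary information-state feedback η̄ : (ℝ ∪ {-∞})^M × Y → U such that V̄(r, y) ≥ max_{i} r^i for all r, y, and B_{η̄(r,y)} V̄(r, y) ≤ V̄(r, y) for all r, y. Then: (i) the value-iteration sequence V_0, V_1, ... is pointwise bounded above by V̄; and (ii) the policy μ̄_t(y_{0:t}, u_{0:t-1}) = η̄(r_t, y_t), where r_0 = 0 and r_{t+1} = g(r_t, y_{t+1}, y_t, u_t), satisfies sup_N J_{μ̄}^N(y_0) ≤ V̄(0, y_0) for every y_0 ∈ Y. -/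

import Mathlib

open scoped BigOperators

noncomputable section

variable {X U W Y : Type*}

/-- The worst-case history `ρ_t(x, y_{0:t-1}, u_{0:t-1})`: the supremum (in `ℝ ∪ {-∞}`,
with `sSup ∅ = ⊥`) of accumulated stage costs over all disturbance sequences and initial
states whose trajectory reaches `x` at time `t` and is consistent with the measurements. -/
noncomputable def rho (f : X → U → W → X) (h : X → Y) (l : X → U → W → ℝ)
    (t : ℕ) (x : X) (ys : ℕ → Y) (us : ℕ → U) : EReal :=
  sSup { c : EReal | ∃ (xs : ℕ → X) (ws : ℕ → W),
    xs t = x ∧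
    (∀ τ < t, xs (τ + 1) = f (xs τ) (us τ) (ws τ)) ∧
    (∀ τ < t, h (xs τ) = ys τ) ∧
    c = ((∑ τ ∈ Finset.range t, l (xs τ) (us τ) (ws τ) : ℝ) : EReal) }

/-- Inputs generated causally by a strategy `π` from a measurement sequence:
`u_t = μ_t(y_{0:t}, u_{0:t-1})`. -/
noncomputable def inputsOf (π : ℕ → List Y → List U → U) (ys : ℕ → Y) : ℕ → U
  | t => π t ((List.range (t + 1)).map ys) (List.ofFn fun i : Fin t => inputsOf π ys i)
  decreasing_by exact i.isLt

/-- Closed loop: state, list of past measurements and list of past inputs. -/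
noncomputable def loop (f : X → U → W → X) (h : X → Y)
    (π : ℕ → List Y → List U → U) (x0 : X) (ws : ℕ → W) : ℕ → X × List Y × List U
  | 0 => (x0, [h x0], [])
  | t + 1 =>
    let p := loop f h π x0 ws t
    let u := π t p.2.1 p.2.2
    let x' := f p.1 u (ws t)
    (x', p.2.1 ++ [h x'], p.2.2 ++ [u])

/-- Closed-loop state `x_t`. -/
noncomputable def cstate (f : X → U → W → X) (h : X → Y)
    (π : ℕ → List Y → List U → U) (x0 : X) (ws : ℕ → W) (t : ℕ) : X :=
  (loop f h π x0 ws t).1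

/-- Closed-loop input `u_t = μ_t(y_{0:t}, u_{0:t-1})`. -/
noncomputable def cinput (f : X → U → W → X) (h : X → Y)
    (π : ℕ → List Y → List U → U) (x0 : X) (ws : ℕ → W) (t : ℕ) : U :=
  π t (loop f h π x0 ws t).2.1 (loop f h π x0 ws t).2.2

/-- The worst-case `N`-horizon performance `J_π^N(y_0)`. -/
noncomputable def Jcost (f : X → U → W → X) (h : X → Y) (l : X → U → W → ℝ)
    (π : ℕ → List Y → List U → U) (N : ℕ) (y0 : Y) : EReal :=
  sSup { c : EReal | ∃ (x0 : X) (ws : ℕ → W), h x0 = y0 ∧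
    c = ((∑ t ∈ Finset.range (N + 1),
      l (cstate f h π x0 ws t) (cinput f h π x0 ws t) (ws t) : ℝ) : EReal) }

/-- The information-state update `g` (componentwise), for preimages of `h`
enumerated by `ξ : Y → Fin M → X`. -/
noncomputable def gup {M : ℕ} (f : X → U → W → X) (l : X → U → W → ℝ)
    (ξ : Y → Fin M → X) (r : Fin M → EReal) (ynext y : Y) (u : U) : Fin M → EReal :=
  fun i => sSup { c : EReal | ∃ (j : Fin M) (w : W),
    ξ ynext i = f (ξ y j) u w ∧ c = (l (ξ y j) u w : EReal) + r j }

/-- The information state `r_t`, defined recursively by `r_0 = 0` and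
`r_t = g(r_{t-1}, y_t, y_{t-1}, u_{t-1})`. -/
noncomputable def rvec {M : ℕ} (f : X → U → W → X) (l : X → U → W → ℝ)
    (ξ : Y → Fin M → X) (ys : ℕ → Y) (us : ℕ → U) : ℕ → Fin M → EReal
  | 0 => 0
  | t + 1 => gup f l ξ (rvec f l ξ ys us t) (ys (t + 1)) (ys t) (us t)

/-- The Bellman operator `B_u V(r, y) = sup_{v ∈ Y} V(g(r, v, y, u), v)`. -/
noncomputable def Bu {M : ℕ} (f : X → U → W → X) (l : X → U → W → ℝ)
    (ξ : Y → Fin M → X) (V : (Fin M → EReal) → Y → EReal) (u : U)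
    (r : Fin M → EReal) (y : Y) : EReal :=
  ⨆ v : Y, V (gup f l ξ r v y u) v

/-- The Bellman operator `B V(r, y) = inf_{u ∈ U} B_u V(r, y)`. -/
noncomputable def Bop {M : ℕ} (f : X → U → W → X) (l : X → U → W → ℝ)
    (ξ : Y → Fin M → X) (V : (Fin M → EReal) → Y → EReal)
    (r : Fin M → EReal) (y : Y) : EReal :=
  ⨅ u : U, Bu f l ξ V u r y

/-- The value iteration `V_0(r, y) = max_i r^i`, `V_{k+1} = B V_k`. -/
noncomputable def Vseq {M : ℕ} (f : X → U → W → X) (l : X → U → W → ℝ)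
    (ξ : Y → Fin M → X) : ℕ → (Fin M → EReal) → Y → EReal
  | 0 => fun r _ => ⨆ i, r i
  | k + 1 => fun r y => Bop f l ξ (Vseq f l ξ k) r y

/-- The (possibly time-varying) information-state feedback policy
`μ_t(y_{0:t}, u_{0:t-1}) = η_t(r_t, y_t)`, where `r_0 = 0` and
`r_{t+1} = g(r_t, y_{t+1}, y_t, u_t)`. -/
noncomputable def infoStrategyT {M : ℕ} [Nonempty Y] [Nonempty U]
    (f : X → U → W → X) (l : X → U → W → ℝ) (ξ : Y → Fin M → X)
    (η : ℕ → (Fin M → EReal) → Y → U) : ℕ → List Y → List U → U :=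
  fun t ysl usl =>
    η t (rvec f l ξ (fun τ => ysl.getD τ (Classical.arbitrary Y))
          (fun τ => usl.getD τ (Classical.arbitrary U)) (ysl.length - 1))
      (ysl.getD (ysl.length - 1) (Classical.arbitrary Y))

/-- Stationary information-state feedback policy `μ_t(y_{0:t}, u_{0:t-1}) = η(r_t, y_t)`. -/
noncomputable def infoStrategy {M : ℕ} [Nonempty Y] [Nonempty U]
    (f : X → U → W → X) (l : X → U → W → ℝ) (ξ : Y → Fin M → X)
    (η : (Fin M → EReal) → Y → U) : ℕ → List Y → List U → U :=
  infoStrategyT f l ξ (fun _ => η)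

end


section ApproxHelpers

variable {X U W Y : Type*}

lemma cstate_succ' (f : X → U → W → X) (h : X → Y)
    (π : ℕ → List Y → List U → U) (x0 : X) (ws : ℕ → W) (t : ℕ) :
    cstate f h π x0 ws (t + 1)
      = f (cstate f h π x0 ws t) (cinput f h π x0 ws t) (ws t) := rfl

lemma loop_lists (f : X → U → W → X) (h : X → Y)
    (π : ℕ → List Y → List U → U) (x0 : X) (ws : ℕ → W) (t : ℕ) :
    (loop f h π x0 ws t).2.1
      = (List.range (t + 1)).map (fun τ => h (cstate f h π x0 ws τ)) ∧
    (loop f h π x0 ws t).2.2 = (List.range t).map (cinput f h π x0 ws) := by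
  induction t with
  | zero =>
    refine ⟨?_, by simp [loop]⟩
    show [h x0] = _
    rw [List.range_succ]
    simp [cstate, loop]
  | succ t ih =>
    have h1 : (loop f h π x0 ws (t + 1)).2.1
        = (loop f h π x0 ws t).2.1 ++ [h (cstate f h π x0 ws (t + 1))] := rfl
    have h2 : (loop f h π x0 ws (t + 1)).2.2
        = (loop f h π x0 ws t).2.2 ++ [cinput f h π x0 ws t] := rfl
    rw [h1, h2, ih.1, ih.2, List.range_succ (n := t + 1), List.range_succ (n := t)]
    simp

lemma rvec_congr {M : ℕ} (f : X → U → W → X) (l : X → U → W → ℝ)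
    (ξ : Y → Fin M → X) (ys1 ys2 : ℕ → Y) (us1 us2 : ℕ → U) (t : ℕ)
    (hy : ∀ τ ≤ t, ys1 τ = ys2 τ) (hu : ∀ τ < t, us1 τ = us2 τ) :
    rvec f l ξ ys1 us1 t = rvec f l ξ ys2 us2 t := by
  induction t with
  | zero => rfl
  | succ t ih =>
    have hr : rvec f l ξ ys1 us1 t = rvec f l ξ ys2 us2 t :=
      ih (fun τ hτ => hy τ (hτ.trans (Nat.le_succ t)))
        (fun τ hτ => hu τ (hτ.trans (Nat.lt_succ_self t)))
    show gup f l ξ (rvec f l ξ ys1 us1 t) (ys1 (t + 1)) (ys1 t) (us1 t)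
        = gup f l ξ (rvec f l ξ ys2 us2 t) (ys2 (t + 1)) (ys2 t) (us2 t)
    rw [hr, hy (t + 1) le_rfl, hy t (Nat.le_succ t), hu t (Nat.lt_succ_self t)]

lemma getD_range_map {α : Type*} (g : ℕ → α) (n τ : ℕ) (d : α) (hτ : τ < n) :
    ((List.range n).map g).getD τ d = g τ := by
  rw [List.getD_eq_getElem _ _ (by simpa using hτ)]
  simp

lemma cinput_info {M : ℕ} [Nonempty Y] [Nonempty U]
    (f : X → U → W → X) (h : X → Y) (l : X → U → W → ℝ) (ξ : Y → Fin M → X)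
    (η : (Fin M → EReal) → Y → U) (x0 : X) (ws : ℕ → W) (t : ℕ) :
    cinput f h (infoStrategy f l ξ η) x0 ws t
      = η (rvec f l ξ (fun τ => h (cstate f h (infoStrategy f l ξ η) x0 ws τ))
            (cinput f h (infoStrategy f l ξ η) x0 ws) t)
          (h (cstate f h (infoStrategy f l ξ η) x0 ws t)) := by
  set π := infoStrategy f l ξ η with hπ
  have hl := loop_lists f h π x0 ws t
  show π t (loop f h π x0 ws t).2.1 (loop f h π x0 ws t).2.2 = _
  rw [hl.1, hl.2]
  show η (rvec f l ξ _ _ _) _ = _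
  have hlen : ((List.range (t + 1)).map
      (fun τ => h (cstate f h π x0 ws τ))).length = t + 1 := by simp
  rw [hlen]
  simp only [Nat.add_sub_cancel]
  rw [getD_range_map _ _ _ _ (Nat.lt_succ_self t)]
  congr 1
  exact rvec_congr f l ξ _ _ _ _ t
    (fun τ hτ => getD_range_map _ _ _ _ (Nat.lt_succ_of_le hτ))
    (fun τ hτ => getD_range_map _ _ _ _ hτ)

end ApproxHelpers


/-- (Approximation.) Under the positivity and finite-preimage
assumptions, suppose there exist `V̄` and a stationary information-state feedback `η̄`
with `V̄(r, y) ≥ max_i r^i` and `B_{η̄(r,y)} V̄(r, y) ≤ V̄(r, y)` for all `r, y`. Then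
(i) the value iteration is pointwise bounded above by `V̄`, and (ii) the policy
`μ̄_t(y_{0:t}, u_{0:t-1}) = η̄(r_t, y_t)` (with `r_0 = 0`,
`r_{t+1} = g(r_t, y_{t+1}, y_t, u_t)`) satisfies `sup_N J_{μ̄}^N(y_0) ≤ V̄(0, y_0)`. -/
theorem approximation_theorem {X U W Y : Type*} [Nonempty X] [Nonempty U]
    [Nonempty W] [Nonempty Y] {M : ℕ} (f : X → U → W → X) (h : X → Y)
    (hsurj : Function.Surjective h) (l : X → U → W → ℝ) (ξ : Y → Fin M → X)
    (pos : ∀ (x : X) (u : U), (0 : EReal) ≤ ⨆ w : W, (l x u w : EReal))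
    (hξ : ∀ y : Y, Set.range (ξ y) = {x : X | h x = y})
    (Vbar : (Fin M → EReal) → Y → EReal) (ηbar : (Fin M → EReal) → Y → U)
    (hV0 : ∀ (r : Fin M → EReal) (y : Y), (⨆ i : Fin M, r i) ≤ Vbar r y)
    (hdec : ∀ (r : Fin M → EReal) (y : Y), Bu f l ξ Vbar (ηbar r y) r y ≤ Vbar r y) :
    (∀ (k : ℕ) (r : Fin M → EReal) (y : Y), Vseq f l ξ k r y ≤ Vbar r y) ∧
    (∀ y0 : Y,
      (⨆ N : ℕ, Jcost f h l (infoStrategy f l ξ ηbar) N y0) ≤ Vbar 0 y0) := by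
  constructor
  · intro k
    induction k with
    | zero => intro r y; exact hV0 r y
    | succ k ih =>
      intro r y
      have hmono : Bu f l ξ (Vseq f l ξ k) (ηbar r y) r y
          ≤ Bu f l ξ Vbar (ηbar r y) r y :=
        iSup_mono fun v => ih _ v
      calc Vseq f l ξ (k + 1) r y ≤ Bu f l ξ (Vseq f l ξ k) (ηbar r y) r y :=
            iInf_le _ _
        _ ≤ Bu f l ξ Vbar (ηbar r y) r y := hmono
        _ ≤ Vbar r y := hdec r y
  · intro y0
    set π := infoStrategy f l ξ ηbar with hπ
    refine iSup_le fun N => sSup_le ?_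
    rintro c ⟨x0, ws, hy0, rfl⟩
    set xs : ℕ → X := cstate f h π x0 ws with hxs
    set us : ℕ → U := cinput f h π x0 ws with hus
    set ys : ℕ → Y := fun τ => h (xs τ) with hys
    set r : ℕ → Fin M → EReal := rvec f l ξ ys us with hr
    have hu_eq : ∀ t, us t = ηbar (r t) (ys t) := fun t =>
      cinput_info f h l ξ ηbar x0 ws t
    have hinv : ∀ t : ℕ, ∃ i : Fin M, ξ (ys t) i = xs t ∧
        ((∑ τ ∈ Finset.range t, l (xs τ) (us τ) (ws τ) : ℝ) : EReal) ≤ r t i := by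
      intro t
      induction t with
      | zero =>
        have hx : xs 0 ∈ Set.range (ξ (ys 0)) := by rw [hξ]; rfl
        obtain ⟨i, hi⟩ := hx
        exact ⟨i, hi, by simp [hr, rvec]⟩
      | succ t ih =>
        obtain ⟨j, hj, hle⟩ := ih
        have hx : xs (t + 1) ∈ Set.range (ξ (ys (t + 1))) := by rw [hξ]; rfl
        obtain ⟨i, hi⟩ := hx
        refine ⟨i, hi, ?_⟩
        have hmem : ((l (xs t) (us t) (ws t) : EReal) + r t j)
            ∈ { c : EReal | ∃ (j' : Fin M) (w : W),
              ξ (ys (t + 1)) i = f (ξ (ys t) j') (us t) w ∧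
              c = (l (ξ (ys t) j') (us t) w : EReal) + r t j' } := by
          refine ⟨j, ws t, ?_, by rw [hj]⟩
          rw [hi, hj]
          exact cstate_succ' f h π x0 ws t
        have hrt : r (t + 1) i = sSup { c : EReal | ∃ (j' : Fin M) (w : W),
            ξ (ys (t + 1)) i = f (ξ (ys t) j') (us t) w ∧
            c = (l (ξ (ys t) j') (us t) w : EReal) + r t j' } := rfl
        rw [hrt]
        refine le_trans ?_ (le_sSup hmem)
        rw [Finset.sum_range_succ]
        push_cast
        rw [add_comm]
        exact add_le_add le_rfl hle
    have hdesc : ∀ t : ℕ, Vbar (r (t + 1)) (ys (t + 1)) ≤ Vbar (r t) (ys t) := by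
      intro t
      have h1 : r (t + 1) = gup f l ξ (r t) (ys (t + 1)) (ys t) (us t) := rfl
      have h2 : Vbar (r (t + 1)) (ys (t + 1))
          ≤ Bu f l ξ Vbar (us t) (r t) (ys t) := by
        rw [h1]
        exact le_iSup (fun v => Vbar (gup f l ξ (r t) v (ys t) (us t)) v) (ys (t + 1))
      rw [hu_eq t] at h2
      exact h2.trans (hdec _ _)
    have hchain : ∀ t : ℕ, Vbar (r t) (ys t) ≤ Vbar (r 0) (ys 0) := by
      intro t
      induction t with
      | zero => exact le_rfl
      | succ t ih => exact (hdesc t).trans ih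
    have h0 : Vbar (r 0) (ys 0) = Vbar 0 y0 := by
      have hy : ys 0 = y0 := hy0
      rw [hy]; rfl
    obtain ⟨i, _, hle⟩ := hinv (N + 1)
    calc ((∑ t ∈ Finset.range (N + 1), l (xs t) (us t) (ws t) : ℝ) : EReal)
        ≤ r (N + 1) i := hle
      _ ≤ ⨆ i', r (N + 1) i' := le_iSup _ i
      _ ≤ Vbar (r (N + 1)) (ys (N + 1)) := hV0 _ _
      _ ≤ Vbar (r 0) (ys 0) := hchain (N + 1)
      _ = Vbar 0 y0 := h0
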